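/- Let I be a proper open subinterval of ℝ. If f : I → ℝ is Wright convex of order 1, i.e., f(tx+(1−t)y) + f((1−t)x+ty) ≤ f(x) + f(y) for all x, y ∈ I and t ∈ [0,1], then there exist a convex function g : I → ℝ and an additive function a : ℝ → ℝ (a(x+y) = a(x) + a(y) for all x, y ∈ ℝ) such that f(x) = g(x) + a(x) for all x ∈ I. -/

import Mathlib

open Finset

/-- The difference operator `Δ_h`. -/
noncomputable def dOp (h : ℝ) (f : ℝ → ℝ) : ℝ → ℝ := fun x => f (x + h) - f x

/-- Iterated difference operator `Δ_{h_1} ⋯ Δ_{h_k}` for a list `[h_1, …, h_k]`. -/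
noncomputable def dList (l : List ℝ) (f : ℝ → ℝ) : ℝ → ℝ := l.foldr dOp f

/-- The divided difference `[x_0, …, x_m; f]`. -/
noncomputable def divDiff (m : ℕ) (x : Fin (m + 1) → ℝ) (f : ℝ → ℝ) : ℝ :=
  ∑ i, f (x i) / ∏ j ∈ Finset.univ.erase i, (x i - x j)

/-- `I` is a proper open subinterval of the real line. -/
def ProperOpenInterval (I : Set ℝ) : Prop :=
  IsOpen I ∧ I.OrdConnected ∧ I.Nonempty ∧ I ≠ Set.univ

/-- A real number which is rational. -/
def IsRatR (x : ℝ) : Prop := ∃ q : ℚ, (q : ℝ) = x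

/-- `f` is Wright convex of order `n` on `I`. -/
def WrightConvexOrder (n : ℕ) (I : Set ℝ) (f : ℝ → ℝ) : Prop :=
  ∀ l : List ℝ, l.length = n + 1 → (∀ h ∈ l, 0 < h) →
    ∀ x : ℝ, x ∈ I → x + l.sum ∈ I → 0 ≤ dList l f x

/-- `f` is Jensen convex of order `n` on `I`. -/
def JensenConvexOrder (n : ℕ) (I : Set ℝ) (f : ℝ → ℝ) : Prop :=
  ∀ h : ℝ, 0 < h → ∀ x : ℝ, x ∈ I → x + (n + 1) * h ∈ I → 0 ≤ (dOp h)^[n + 1] f x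

/-- `f` is convex of order `n` on `I`. -/
def ConvexOrder (n : ℕ) (I : Set ℝ) (f : ℝ → ℝ) : Prop :=
  ∀ x : Fin (n + 2) → ℝ, Function.Injective x → (∀ i, x i ∈ I) →
    0 ≤ divDiff (n + 1) x f

section NgAux

open Filter Set

namespace NgAux

/-- Raw Wright convexity. -/
def Wr (I : Set ℝ) (F : ℝ → ℝ) : Prop :=
  ∀ x ∈ I, ∀ y ∈ I, ∀ t ∈ Set.Icc (0 : ℝ) 1,
    F (t * x + (1 - t) * y) + F ((1 - t) * x + t * y) ≤ F x + F y

lemma pair {I : Set ℝ} {F : ℝ → ℝ} (hW : Wr I F) {x y m₁ m₂ : ℝ}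
    (hx : x ∈ I) (hy : y ∈ I) (hsum : m₁ + m₂ = x + y)
    (h1 : min x y ≤ m₁) (h2 : m₁ ≤ max x y) :
    F m₁ + F m₂ ≤ F x + F y := by
  rcases le_total x y with hxy | hxy
  · rw [min_eq_left hxy] at h1; rw [max_eq_right hxy] at h2
    rcases eq_or_lt_of_le hxy with heq | hlt
    · have hm1 : m₁ = x := le_antisymm (heq ▸ h2) h1
      have hm2 : m₂ = y := by linarith
      rw [hm1, hm2]
    · set t : ℝ := (y - m₁) / (y - x) with ht
      have hyx : (0:ℝ) < y - x := by linarith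
      have ht0 : 0 ≤ t := div_nonneg (by linarith) hyx.le
      have ht1 : t ≤ 1 := by
        rw [div_le_one hyx]; linarith
      have e1 : t * x + (1 - t) * y = m₁ := by
        rw [ht, div_mul_eq_mul_div, one_sub_div hyx.ne', div_mul_eq_mul_div, ← add_div,
          div_eq_iff hyx.ne']; ring
      have e2 : (1 - t) * x + t * y = m₂ := by
        have : (1 - t) * x + t * y = x + y - (t * x + (1 - t) * y) := by ring
        rw [this, e1]; linarith
      have := hW x hx y hy t ⟨ht0, ht1⟩
      rw [e1, e2] at this
      linarith
  · rw [min_eq_right hxy] at h1; rw [max_eq_left hxy] at h2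
    rcases eq_or_lt_of_le hxy with heq | hlt
    · have hm1 : m₁ = x := le_antisymm h2 (heq ▸ h1)
      have hm2 : m₂ = y := by linarith
      rw [hm1, hm2]
    · set t : ℝ := (x - m₁) / (x - y) with ht
      have hyx : (0:ℝ) < x - y := by linarith
      have ht0 : 0 ≤ t := div_nonneg (by linarith) hyx.le
      have ht1 : t ≤ 1 := by
        rw [div_le_one hyx]; linarith
      have e1 : t * y + (1 - t) * x = m₁ := by
        rw [ht, div_mul_eq_mul_div, one_sub_div hyx.ne', div_mul_eq_mul_div, ← add_div,
          div_eq_iff hyx.ne']; ring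
      have e2 : (1 - t) * y + t * x = m₂ := by
        have : (1 - t) * y + t * x = x + y - (t * y + (1 - t) * x) := by ring
        rw [this, e1]; linarith
      have := hW y hy x hx t ⟨ht0, ht1⟩
      rw [e1, e2] at this
      linarith

/-- Increment monotonicity. -/
lemma incr {I : Set ℝ} {F : ℝ → ℝ} (hW : Wr I F) {u v h : ℝ}
    (hu : u ∈ I) (hvh : v + h ∈ I) (huv : u ≤ v) (hh : 0 ≤ h) :
    F (u + h) - F u ≤ F (v + h) - F v := by
  have := pair hW (x := u) (y := v + h) (m₁ := u + h) (m₂ := v) hu hvh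
    (by ring) (by rw [min_eq_left (by linarith)]; linarith)
    (by rw [max_eq_right (by linarith)]; linarith)
  linarith

/-- Symmetric second-difference monotonicity. -/
lemma symm_mono {I : Set ℝ} {F : ℝ → ℝ} (hW : Wr I F) {p s s' : ℝ}
    (h1 : p - s' ∈ I) (h2 : p + s' ∈ I) (hs : 0 ≤ s) (hss : s ≤ s') :
    F (p + s) + F (p - s) ≤ F (p + s') + F (p - s') := by
  have := pair hW (x := p - s') (y := p + s') (m₁ := p + s) (m₂ := p - s) h1 h2
    (by ring) (by rw [min_eq_left (by linarith)]; linarith)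
    (by rw [max_eq_right (by linarith)]; linarith)
  linarith

lemma midpt {I : Set ℝ} {F : ℝ → ℝ} (hW : Wr I F) {x y : ℝ}
    (hx : x ∈ I) (hy : y ∈ I) : 2 * F ((x + y) / 2) ≤ F x + F y := by
  have := pair hW (x := x) (y := y) (m₁ := (x + y) / 2) (m₂ := (x + y) / 2) hx hy
    (by ring) ?_ ?_
  · linarith
  · rcases le_total x y with h | h
    · rw [min_eq_left h]; linarith
    · rw [min_eq_right h]; linarith
  · rcases le_total x y with h | h
    · rw [max_eq_right h]; linarith
    · rw [max_eq_left h]; linarith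

/-- `t` is a good convexity coefficient for `F` on `I`. -/
def Good (I : Set ℝ) (F : ℝ → ℝ) (t : ℝ) : Prop :=
  0 ≤ t ∧ t ≤ 1 ∧ ∀ x ∈ I, ∀ y ∈ I, F (t * x + (1 - t) * y) ≤ t * F x + (1 - t) * F y

lemma good_zero {I : Set ℝ} {F : ℝ → ℝ} : Good I F 0 := by
  refine ⟨le_rfl, zero_le_one, fun x hx y hy => ?_⟩
  norm_num

lemma good_one {I : Set ℝ} {F : ℝ → ℝ} : Good I F 1 := by
  refine ⟨zero_le_one, le_rfl, fun x hx y hy => ?_⟩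
  norm_num

lemma good_mid {I : Set ℝ} {F : ℝ → ℝ} (hC : Convex ℝ I) (hW : Wr I F)
    {s t : ℝ} (hs : Good I F s) (ht : Good I F t) : Good I F ((s + t) / 2) := by
  obtain ⟨hs0, hs1, hsg⟩ := hs
  obtain ⟨ht0, ht1, htg⟩ := ht
  refine ⟨by linarith, by linarith, fun x hx y hy => ?_⟩
  have hu : s * x + (1 - s) * y ∈ I := by
    have := hC hx hy hs0 (by linarith : (0:ℝ) ≤ 1 - s) (by ring)
    simpa [smul_eq_mul] using this
  have hv : t * x + (1 - t) * y ∈ I := by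
    have := hC hx hy ht0 (by linarith : (0:ℝ) ≤ 1 - t) (by ring)
    simpa [smul_eq_mul] using this
  have hm := midpt hW hu hv
  have e : ((s * x + (1 - s) * y) + (t * x + (1 - t) * y)) / 2
      = ((s + t) / 2) * x + (1 - (s + t) / 2) * y := by ring
  rw [e] at hm
  have h1 := hsg x hx y hy
  have h2 := htg x hx y hy
  linarith

lemma good_dyadic {I : Set ℝ} {F : ℝ → ℝ} (hC : Convex ℝ I) (hW : Wr I F) :
    ∀ n : ℕ, ∀ k : ℕ, k ≤ 2 ^ n → Good I F ((k : ℝ) / 2 ^ n) := by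
  intro n
  induction n with
  | zero =>
    intro k hk
    interval_cases k
    · simpa using (good_zero (I := I) (F := F))
    · simpa using (good_one (I := I) (F := F))
  | succ n ih =>
    intro k hk
    rcases Nat.even_or_odd k with ⟨j, hj⟩ | ⟨j, hj⟩
    · subst hj
      have hj2 : j ≤ 2 ^ n := by
        have : 2 * j ≤ 2 * 2 ^ n := by
          rw [pow_succ] at hk; omega
        omega
      have := ih j hj2
      have e : ((j + j : ℕ) : ℝ) / 2 ^ (n + 1) = (j : ℝ) / 2 ^ n := by
        push_cast [pow_succ]
        field_simp
        ring
      rwa [e]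
    · subst hj
      have hj2 : j + 1 ≤ 2 ^ n := by
        rw [pow_succ] at hk; omega
      have g1 := ih j (by omega)
      have g2 := ih (j + 1) hj2
      have := good_mid hC hW g1 g2
      have e : ((j : ℝ) / 2 ^ n + ((j + 1 : ℕ) : ℝ) / 2 ^ n) / 2
          = ((2 * j + 1 : ℕ) : ℝ) / 2 ^ (n + 1) := by
        push_cast [pow_succ]
        field_simp
        ring
      rwa [e] at this

lemma good_halfpow {I : Set ℝ} {F : ℝ → ℝ} (hC : Convex ℝ I) (hW : Wr I F) (n : ℕ) :
    Good I F ((1 / 2 : ℝ) ^ n) := by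
  have := good_dyadic hC hW n 1 (Nat.one_le_two_pow)
  have e : ((1 : ℕ) : ℝ) / 2 ^ n = (1 / 2 : ℝ) ^ n := by
    rw [div_pow]; norm_num
  rwa [e] at this

/-- Right difference quotients shrink as the step shrinks (dyadically). -/
lemma qmono {I : Set ℝ} {F : ℝ → ℝ} (hC : Convex ℝ I) (hW : Wr I F)
    {x h : ℝ} {m n : ℕ} (hx : x ∈ I) (hz : x + (1 / 2 : ℝ) ^ m * h ∈ I) (hmn : m ≤ n) :
    (F (x + (1 / 2 : ℝ) ^ n * h) - F x) / (1 / 2 : ℝ) ^ n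
      ≤ (F (x + (1 / 2 : ℝ) ^ m * h) - F x) / (1 / 2 : ℝ) ^ m := by
  set t : ℝ := (1 / 2 : ℝ) ^ (n - m) with htdef
  obtain ⟨ht0, ht1, htg⟩ := good_halfpow hC hW (I := I) (F := F) (n - m)
  have hcm : (0:ℝ) < (1 / 2 : ℝ) ^ m := by positivity
  have hcn : (0:ℝ) < (1 / 2 : ℝ) ^ n := by positivity
  have htc : t * (1 / 2 : ℝ) ^ m = (1 / 2 : ℝ) ^ n := by
    rw [htdef, ← pow_add, Nat.sub_add_cancel hmn]
  have key := htg _ hz _ hx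
  have e : t * (x + (1 / 2 : ℝ) ^ m * h) + (1 - t) * x = x + (1 / 2 : ℝ) ^ n * h := by
    have : t * (x + (1 / 2 : ℝ) ^ m * h) + (1 - t) * x = x + (t * (1 / 2 : ℝ) ^ m) * h := by
      ring
    rw [this, htc]
  rw [e] at key
  -- key : F (x + cn h) ≤ t * F (x + cm h) + (1 - t) * F x
  rw [div_le_div_iff₀ hcn hcm]
  have h2 : F (x + (1 / 2 : ℝ) ^ n * h) - F x ≤ t * (F (x + (1 / 2 : ℝ) ^ m * h) - F x) := by
    linarith [key]
  calc (F (x + (1 / 2 : ℝ) ^ n * h) - F x) * (1 / 2 : ℝ) ^ m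
      ≤ t * (F (x + (1 / 2 : ℝ) ^ m * h) - F x) * (1 / 2 : ℝ) ^ m :=
        mul_le_mul_of_nonneg_right h2 hcm.le
    _ = (F (x + (1 / 2 : ℝ) ^ m * h) - F x) * (t * (1 / 2 : ℝ) ^ m) := by ring
    _ = (F (x + (1 / 2 : ℝ) ^ m * h) - F x) * (1 / 2 : ℝ) ^ n := by rw [htc]

lemma cmem {I : Set ℝ} (hC : Convex ℝ I) {x y s : ℝ} (hx : x ∈ I) (hy : y ∈ I)
    (hs0 : 0 ≤ s) (hs1 : s ≤ 1) : s * x + (1 - s) * y ∈ I := by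
  have := hC hx hy hs0 (by linarith : (0:ℝ) ≤ 1 - s) (by ring)
  simpa [smul_eq_mul] using this

/-- A function with dyadic convexity which is monotone on both sides of a point `p`
is convex. -/
lemma convex_of_mono {I : Set ℝ} {G : ℝ → ℝ} (hC : Convex ℝ I) (hW : Wr I G) (p : ℝ)
    (hR : ∀ u v, u ∈ I → v ∈ I → p ≤ u → u ≤ v → G u ≤ G v)
    (hL : ∀ u v, u ∈ I → v ∈ I → u ≤ v → v ≤ p → G v ≤ G u) :
    ∀ x ∈ I, ∀ y ∈ I, ∀ t ∈ Set.Icc (0:ℝ) 1,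
      G (t * x + (1 - t) * y) ≤ t * G x + (1 - t) * G y := by
  have hmain : ∀ x ∈ I, ∀ y ∈ I, x ≤ y → ∀ t ∈ Set.Icc (0:ℝ) 1,
      G (t * x + (1 - t) * y) ≤ t * G x + (1 - t) * G y := by
    intro x hx y hy hxy t ht
    obtain ⟨ht0, ht1⟩ := ht
    set m := t * x + (1 - t) * y with hmdef
    have hm : m ∈ I := cmem hC hx hy ht0 ht1
    have hseq : ∀ k : ℕ, ∃ s : ℝ, 0 ≤ s ∧ s ≤ 1 ∧ |s - t| ≤ (1/2:ℝ)^k ∧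
        G m ≤ s * G x + (1 - s) * G y := by
      intro k
      have h2k : (0:ℝ) < 2 ^ k := by positivity
      rcases le_or_gt p m with hpm | hmp
      · -- approximate from above (coefficient below t)
        set N : ℕ := (⌊t * 2 ^ k⌋).toNat with hNdef
        have hfl0 : (0:ℤ) ≤ ⌊t * 2 ^ k⌋ := Int.floor_nonneg.mpr (by positivity)
        have hNcast : (N : ℝ) = ((⌊t * 2 ^ k⌋ : ℤ) : ℝ) := by
          rw [hNdef]; exact_mod_cast congrArg (fun z : ℤ => (z : ℝ)) (Int.toNat_of_nonneg hfl0)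
        have hN2 : N ≤ 2 ^ k := by
          have h1 : ((⌊t * 2 ^ k⌋ : ℤ) : ℝ) ≤ t * 2 ^ k := Int.floor_le _
          have h2 : t * 2 ^ k ≤ 2 ^ k := by nlinarith
          have : (⌊t * 2 ^ k⌋ : ℤ) ≤ (2 ^ k : ℕ) := by exact_mod_cast h1.trans h2
          omega
        obtain ⟨hs0, hs1, hsg⟩ := good_dyadic hC hW k N hN2
        set s : ℝ := (N : ℝ) / 2 ^ k with hsdef
        have hst : s ≤ t := by
          rw [hsdef, div_le_iff₀ h2k, hNcast]
          exact Int.floor_le _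
        have hts : t - s ≤ (1/2:ℝ)^k := by
          have h1 : t * 2 ^ k < (N : ℝ) + 1 := by
            rw [hNcast]; exact Int.lt_floor_add_one _
          have h2 : (1/2:ℝ)^k = 1 / 2 ^ k := by rw [div_pow]; norm_num
          rw [h2, hsdef]
          rw [sub_le_iff_le_add, ← add_div, le_div_iff₀ h2k]
          linarith
        refine ⟨s, hs0, hs1, by rw [abs_le]; constructor <;> linarith, ?_⟩
        have hm' : s * x + (1 - s) * y ∈ I := cmem hC hx hy hs0 hs1
        have hmm : m ≤ s * x + (1 - s) * y := by
          have : s * x + (1 - s) * y - m = (t - s) * (y - x) := by rw [hmdef]; ring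
          nlinarith
        exact (hR m _ hm hm' hpm hmm).trans (hsg x hx y hy)
      · -- approximate from below (coefficient above t)
        set N : ℕ := (⌈t * 2 ^ k⌉).toNat with hNdef
        have hfl0 : (0:ℤ) ≤ ⌈t * 2 ^ k⌉ := Int.ceil_nonneg (by positivity)
        have hNcast : (N : ℝ) = ((⌈t * 2 ^ k⌉ : ℤ) : ℝ) := by
          rw [hNdef]; exact_mod_cast congrArg (fun z : ℤ => (z : ℝ)) (Int.toNat_of_nonneg hfl0)
        have hN2 : N ≤ 2 ^ k := by
          have h2 : t * 2 ^ k ≤ 2 ^ k := by nlinarith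
          have : (⌈t * 2 ^ k⌉ : ℤ) ≤ (2 ^ k : ℕ) := Int.ceil_le.mpr (by exact_mod_cast h2)
          omega
        obtain ⟨hs0, hs1, hsg⟩ := good_dyadic hC hW k N hN2
        set s : ℝ := (N : ℝ) / 2 ^ k with hsdef
        have hst : t ≤ s := by
          rw [hsdef, le_div_iff₀ h2k, hNcast]
          exact Int.le_ceil _
        have hts : s - t ≤ (1/2:ℝ)^k := by
          have h1 : (N : ℝ) < t * 2 ^ k + 1 := by
            rw [hNcast]; exact Int.ceil_lt_add_one _
          have h2 : (1/2:ℝ)^k = 1 / 2 ^ k := by rw [div_pow]; norm_num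
          rw [h2, hsdef, sub_le_iff_le_add, div_le_iff₀ h2k]
          have e2 : (1 / (2:ℝ) ^ k + t) * 2 ^ k = t * 2 ^ k + 1 := by field_simp; ring
          rw [e2]; linarith
        refine ⟨s, hs0, hs1, by rw [abs_le]; constructor <;> linarith, ?_⟩
        have hm' : s * x + (1 - s) * y ∈ I := cmem hC hx hy hs0 hs1
        have hmm : s * x + (1 - s) * y ≤ m := by
          have : m - (s * x + (1 - s) * y) = (s - t) * (y - x) := by rw [hmdef]; ring
          nlinarith
        exact (hL _ m hm' hm hmm hmp.le).trans (hsg x hx y hy)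
    choose sc hs0 hs1 hsd hsg using hseq
    have hpow : Filter.Tendsto (fun k : ℕ => ((1:ℝ)/2) ^ k) atTop (nhds 0) :=
      tendsto_pow_atTop_nhds_zero_of_lt_one (by norm_num) (by norm_num)
    have hst : Filter.Tendsto sc atTop (nhds t) := by
      have hlo : ∀ k, t - (1/2:ℝ)^k ≤ sc k := fun k => by
        have := (abs_le.mp (hsd k)).1; linarith
      have hhi : ∀ k, sc k ≤ t + (1/2:ℝ)^k := fun k => by
        have := (abs_le.mp (hsd k)).2; linarith
      have l1 : Filter.Tendsto (fun k : ℕ => t - (1/2:ℝ)^k) atTop (nhds t) := by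
        simpa using tendsto_const_nhds.sub hpow
      have l2 : Filter.Tendsto (fun k : ℕ => t + (1/2:ℝ)^k) atTop (nhds t) := by
        simpa using tendsto_const_nhds.add hpow
      exact tendsto_of_tendsto_of_tendsto_of_le_of_le l1 l2 hlo hhi
    have hrhs : Filter.Tendsto (fun k => sc k * G x + (1 - sc k) * G y) atTop
        (nhds (t * G x + (1 - t) * G y)) := by
      exact (hst.mul_const _).add ((tendsto_const_nhds.sub hst).mul_const _)
    exact ge_of_tendsto hrhs (Filter.Eventually.of_forall hsg)
  intro x hx y hy t ht
  rcases le_total x y with hxy | hxy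
  · exact hmain x hx y hy hxy t ht
  · obtain ⟨ht0, ht1⟩ := ht
    have := hmain y hy x hx hxy (1 - t) ⟨by linarith, by linarith⟩
    have e : (1 - t) * y + (1 - (1 - t)) * x = t * x + (1 - t) * y := by ring
    rw [e] at this
    linarith

end NgAux

end NgAux

open Filter Set MeasureTheory in
/-- Ng's decomposition theorem: a Wright convex function is the sum of a convex
function and an additive function. -/
theorem ng_decomposition (I : Set ℝ) (hI : ProperOpenInterval I) (f : ℝ → ℝ)
    (hf : ∀ x ∈ I, ∀ y ∈ I, ∀ t ∈ Set.Icc (0 : ℝ) 1,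
      f (t * x + (1 - t) * y) + f ((1 - t) * x + t * y) ≤ f x + f y) :
    ∃ g a : ℝ → ℝ,
      (∀ x ∈ I, ∀ y ∈ I, ∀ t ∈ Set.Icc (0 : ℝ) 1,
        g (t * x + (1 - t) * y) ≤ t * g x + (1 - t) * g y) ∧
      (∀ x y : ℝ, a (x + y) = a x + a y) ∧
      (∀ x ∈ I, f x = g x + a x) := by
  classical
  obtain ⟨hIopen, hIord, ⟨p₀, hp₀⟩, -⟩ := hI
  have hC : Convex ℝ I := convex_iff_ordConnected.mpr hIord
  have hWf : NgAux.Wr I f := hf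
  have hIcc : ∀ u v w : ℝ, u ∈ I → v ∈ I → u ≤ w → w ≤ v → w ∈ I :=
    fun u v w hu hv h1 h2 => hIord.out hu hv ⟨h1, h2⟩
  obtain ⟨δ, hδ0, hball⟩ : ∃ δ > 0, ∀ y : ℝ, |y - p₀| < δ → y ∈ I := by
    rcases Metric.isOpen_iff.mp hIopen p₀ hp₀ with ⟨δ, hδ, hsub⟩
    exact ⟨δ, hδ, fun y hy => hsub (by simpa [Real.dist_eq] using hy)⟩
  set S : ℝ := δ / 2 with hSdef
  have hS0 : 0 < S := by positivity
  have hmem : ∀ x u : ℝ, |x - p₀| < S → |u| < S → x + u ∈ I := by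
    intro x u hx hu
    apply hball
    have e : x + u - p₀ = (x - p₀) + u := by ring
    have h1 : |x + u - p₀| ≤ |x - p₀| + |u| := by rw [e]; exact abs_add_le _ _
    have : S + S = δ := by rw [hSdef]; ring
    linarith
  have hmemI : ∀ x : ℝ, |x - p₀| < S → x ∈ I := by
    intro x hx
    have := hmem x 0 hx (by simpa using hS0)
    simpa using this
  have hc0 : ∀ n : ℕ, (0:ℝ) < (1/2:ℝ)^n := fun n => by positivity
  have hctend : Tendsto (fun n : ℕ => (1/2:ℝ)^n) atTop (nhds 0) :=
    tendsto_pow_atTop_nhds_zero_of_lt_one (by norm_num) (by norm_num)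
  have hK : ∀ h : ℝ, ∃ N : ℕ, ∀ n, N ≤ n → (1/2:ℝ)^n * |h| < S := by
    intro h
    have h1 : Tendsto (fun n : ℕ => (1/2:ℝ)^n * |h|) atTop (nhds 0) := by
      simpa using hctend.mul_const |h|
    exact Filter.eventually_atTop.mp (h1.eventually (gt_mem_nhds hS0))
  choose K hKs using hK
  set Q : ℝ → ℝ → ℕ → ℝ :=
    fun x h n => (f (x + (1/2:ℝ)^n * h) - f x) / (1/2:ℝ)^n with hQdef
  set A : ℝ → ℝ → ℝ := fun x h => ⨅ n : ℕ, Q x h (n + K h) with hAdef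
  have habs : ∀ (h : ℝ) (n : ℕ), |(1/2:ℝ)^n * h| = (1/2:ℝ)^n * |h| := by
    intro h n; rw [abs_mul, abs_of_pos (hc0 n)]
  have hvalid : ∀ (x h : ℝ) (n : ℕ), |x - p₀| < S → K h ≤ n → x + (1/2:ℝ)^n * h ∈ I := by
    intro x h n hx hn
    exact hmem x _ hx (by rw [habs]; exact hKs h n hn)
  have hvalidneg : ∀ (x h : ℝ) (n : ℕ), |x - p₀| < S → K h ≤ n →
      x + (1/2:ℝ)^n * (-h) ∈ I := by
    intro x h n hx hn
    exact hmem x _ hx (by rw [habs, abs_neg]; exact hKs h n hn)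
  have hQanti : ∀ (x h : ℝ) (m n : ℕ), x ∈ I → x + (1/2:ℝ)^m * h ∈ I → m ≤ n →
      Q x h n ≤ Q x h m := by
    intro x h m n hx hz hmn
    exact NgAux.qmono hC hWf hx hz hmn
  have hQsym : ∀ (x h : ℝ) (n : ℕ), x + (1/2:ℝ)^n * h ∈ I → x + (1/2:ℝ)^n * (-h) ∈ I →
      0 ≤ Q x h n + Q x (-h) n := by
    intro x h n h1 h2
    have hm := NgAux.midpt hWf h1 h2
    have e : ((x + (1/2:ℝ)^n * h) + (x + (1/2:ℝ)^n * (-h))) / 2 = x := by ring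
    rw [e] at hm
    have h3 : 0 ≤ (f (x + (1/2:ℝ)^n*h) - f x) + (f (x + (1/2:ℝ)^n*(-h)) - f x) := by
      linarith
    have h4 := div_nonneg h3 (hc0 n).le
    rw [add_div] at h4
    exact h4
  have hbdd : ∀ x h : ℝ, |x - p₀| < S →
      BddBelow (Set.range fun n : ℕ => Q x h (n + K h)) := by
    intro x h hx
    refine ⟨-(Q x (-h) (K h)), ?_⟩
    rintro y ⟨n, rfl⟩
    have h1 : x + (1/2:ℝ)^(n + K h) * h ∈ I := hvalid x h _ hx (by omega)
    have h2 : x + (1/2:ℝ)^(n + K h) * (-h) ∈ I := hvalidneg x h _ hx (by omega)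
    have h3 := hQsym x h (n + K h) h1 h2
    have h4 : Q x (-h) (n + K h) ≤ Q x (-h) (K h) :=
      hQanti x (-h) (K h) (n + K h) (hmemI x hx) (hvalidneg x h (K h) hx le_rfl) (by omega)
    simp only [lowerBounds, Set.mem_setOf_eq] at *
    linarith
  have hTend : ∀ x h : ℝ, |x - p₀| < S →
      Tendsto (fun n => Q x h n) atTop (nhds (A x h)) := by
    intro x h hx
    have hanti : Antitone fun n : ℕ => Q x h (n + K h) := by
      intro m n hmn
      exact hQanti x h (m + K h) (n + K h) (hmemI x hx) (hvalid x h _ hx (by omega)) (by omega)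
    have h1 := tendsto_atTop_ciInf hanti (hbdd x h hx)
    exact (tendsto_add_atTop_iff_nat (K h)).mp (by simpa [hAdef] using h1)
  have hAleQ : ∀ (x h : ℝ) (n : ℕ), |x - p₀| < S → K h ≤ n → A x h ≤ Q x h n := by
    intro x h n hx hn
    have h1 := ciInf_le (hbdd x h hx) (n - K h)
    rw [Nat.sub_add_cancel hn] at h1
    simpa [hAdef] using h1
  have hAle : ∀ x h : ℝ, |x - p₀| < S → x + h ∈ I → A x h ≤ f (x + h) - f x := by
    intro x h hx hxh
    have h0 : x + (1/2:ℝ)^0 * h ∈ I := by simpa using hxh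
    have h1 : Q x h (K h) ≤ Q x h 0 := hQanti x h 0 (K h) (hmemI x hx) h0 (Nat.zero_le _)
    have h2 := hAleQ x h (K h) hx le_rfl
    have h3 : Q x h 0 = f (x + h) - f x := by simp [hQdef]
    linarith
  have hdnonneg : ∀ x h : ℝ, |x - p₀| < S → 0 ≤ A x h + A x (-h) := by
    intro x h hx
    refine ge_of_tendsto ((hTend x h hx).add (hTend x (-h) hx)) ?_
    filter_upwards [eventually_ge_atTop (K h)] with n hn
    exact hQsym x h n (hvalid x h n hx hn) (hvalidneg x h n hx hn)
  have hcross : ∀ x y : ℝ, |x - p₀| < S → |y - p₀| < S → x < y →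
      A x 1 ≤ -(A y (-1)) := by
    intro x y hx hy hxy
    refine le_of_tendsto_of_tendsto (hTend x 1 hx) ((hTend y (-1) hy).neg) ?_
    have hev1 : ∀ᶠ n : ℕ in atTop, (1/2:ℝ)^n < y - x :=
      hctend.eventually (gt_mem_nhds (by linarith))
    filter_upwards [hev1, eventually_ge_atTop (K 1), eventually_ge_atTop (K (-1))]
      with n h1 h2 h3
    have hu : x ∈ I := hmemI x hx
    have hyI : y ∈ I := hmemI y hy
    have hvh : (y - (1/2:ℝ)^n) + (1/2:ℝ)^n ∈ I := by
      rw [sub_add_cancel]; exact hyI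
    have hincr := NgAux.incr hWf (u := x) (v := y - (1/2:ℝ)^n) (h := (1/2:ℝ)^n)
      hu hvh (by linarith) (hc0 n).le
    rw [sub_add_cancel] at hincr
    simp only [hQdef, Pi.neg_apply]
    rw [mul_one, mul_neg_one, ← sub_eq_add_neg, ← neg_div, neg_sub]
    exact (div_le_div_iff_of_pos_right (hc0 n)).mpr (by linarith)
  obtain ⟨p, hpS, hplr⟩ : ∃ p : ℝ, |p - p₀| < S ∧ A p 1 + A p (-1) ≤ 0 := by
    by_contra hcon
    push_neg at hcon
    have hIooS : ∀ x : ℝ, x ∈ Set.Ioo (p₀ - S) (p₀ + S) → |x - p₀| < S := by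
      intro x hx
      rw [abs_sub_lt_iff]
      exact ⟨by linarith [hx.2], by linarith [hx.1]⟩
    have hsel : ∀ x ∈ Set.Ioo (p₀ - S) (p₀ + S),
        ∃ q : ℚ, -(A x (-1)) < (q:ℝ) ∧ (q:ℝ) < A x 1 := by
      intro x hx
      exact exists_rat_btwn (by have := hcon x (hIooS x hx); linarith)
    choose! φ hφ1 hφ2 using hsel
    have hmono : ∀ a b : ℝ, a ∈ Set.Ioo (p₀ - S) (p₀ + S) → b ∈ Set.Ioo (p₀ - S) (p₀ + S) →
        a < b → (φ a : ℝ) < (φ b : ℝ) := by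
      intro a b ha hb hab
      have h1 := hφ2 a ha
      have h2 := hφ1 b hb
      have h3 := hcross a b (hIooS a ha) (hIooS b hb) hab
      linarith
    have hinj : Set.InjOn φ (Set.Ioo (p₀ - S) (p₀ + S)) := by
      intro x hx y hy hxyeq
      rcases lt_trichotomy x y with h | h | h
      · exact absurd hxyeq (by exact_mod_cast (hmono x y hx hy h).ne)
      · exact h
      · exact absurd hxyeq (by exact_mod_cast (hmono y x hy hx h).ne')
    have hcnt : (Set.Ioo (p₀ - S) (p₀ + S)).Countable :=
      Set.countable_of_injective_of_countable_image hinj (Set.to_countable _)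
    have hvol := hcnt.measure_zero MeasureTheory.volume
    rw [Real.volume_Ioo] at hvol
    have h1 : (0:ℝ) < (p₀ + S) - (p₀ - S) := by linarith
    rw [ENNReal.ofReal_eq_zero] at hvol
    linarith
  have hpI : p ∈ I := hmemI p hpS
  have hscale : ∀ (h : ℝ) (m : ℕ), A p ((1/2:ℝ)^m * h) = (1/2:ℝ)^m * A p h := by
    intro h m
    have h1 := hTend p ((1/2:ℝ)^m * h) hpS
    have heq : ∀ n : ℕ, Q p ((1/2:ℝ)^m * h) n = (1/2:ℝ)^m * Q p h (n + m) := by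
      intro n
      simp only [hQdef]
      rw [show (1/2:ℝ)^n * ((1/2:ℝ)^m * h) = (1/2:ℝ)^(n+m) * h by rw [pow_add]; ring]
      rw [pow_add]
      have hne : ((1/2:ℝ)^n) ≠ 0 := (hc0 n).ne'
      have hne2 : ((1/2:ℝ)^m) ≠ 0 := (hc0 m).ne'
      field_simp
    simp only [heq] at h1
    have h2 : Tendsto (fun n : ℕ => (1/2:ℝ)^m * Q p h (n + m)) atTop
        (nhds ((1/2:ℝ)^m * A p h)) :=
      ((tendsto_add_atTop_iff_nat m).mpr (hTend p h hpS)).const_mul _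
    exact tendsto_nhds_unique h1 h2
  have hA0 : A p 0 = 0 := by
    have h1 := hTend p 0 hpS
    have heq : ∀ n : ℕ, Q p 0 n = 0 := by intro n; simp [hQdef]
    simp only [heq] at h1
    exact tendsto_nhds_unique h1 tendsto_const_nhds
  have hdmono : ∀ h h' : ℝ, 0 ≤ h → h ≤ h' →
      A p h + A p (-h) ≤ A p h' + A p (-h') := by
    intro h h' h0 hhh
    refine le_of_tendsto_of_tendsto ((hTend p h hpS).add (hTend p (-h) hpS))
      ((hTend p h' hpS).add (hTend p (-h') hpS)) ?_
    filter_upwards [eventually_ge_atTop (K h'), eventually_ge_atTop (K h)] with n hn1 hn2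
    have h1 : p + (1/2:ℝ)^n * h' ∈ I := hvalid p h' n hpS hn1
    have h2 : p - (1/2:ℝ)^n * h' ∈ I := by
      have := hvalidneg p h' n hpS hn1
      rwa [mul_neg, ← sub_eq_add_neg] at this
    have hsm := NgAux.symm_mono hWf (p := p) (s := (1/2:ℝ)^n * h) (s' := (1/2:ℝ)^n * h')
      h2 h1 (by positivity) (by nlinarith [hc0 n])
    simp only [hQdef]
    rw [mul_neg, ← sub_eq_add_neg, mul_neg, ← sub_eq_add_neg,
      ← add_div, ← add_div]
    exact (div_le_div_iff_of_pos_right (hc0 n)).mpr (by linarith)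
  have hD0 : ∀ h : ℝ, A p h + A p (-h) = 0 := by
    have key : ∀ h : ℝ, 0 < h → A p h + A p (-h) = 0 := by
      intro h h0
      have hge := hdnonneg p h hpS
      obtain ⟨m, hm⟩ := pow_unbounded_of_one_lt h (one_lt_two (α := ℝ))
      have hmono' := hdmono h (2^m) h0.le hm.le
      have he : (1/2:ℝ)^m * 2^m = 1 := by
        rw [← mul_pow]; norm_num
      have hs1 := hscale (2^m) m
      rw [he] at hs1
      have hs2 := hscale (-(2^m)) m
      rw [show (1/2:ℝ)^m * -(2^m) = -1 by rw [mul_neg, he]] at hs2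
      have hsum : (1/2:ℝ)^m * (A p (2^m) + A p (-(2^m))) ≤ (1/2:ℝ)^m * 0 := by
        rw [mul_zero, mul_add, ← hs1, ← hs2]
        exact hplr
      have h2 := le_of_mul_le_mul_left hsum (hc0 m)
      linarith
    intro h
    rcases lt_trichotomy h 0 with h0 | h0 | h0
    · have := key (-h) (by linarith)
      rw [neg_neg] at this
      linarith
    · subst h0; rw [neg_zero, hA0]; ring
    · exact key h h0
  have hneg : ∀ h : ℝ, A p (-h) = -(A p h) := fun h => by have := hD0 h; linarith
  have hsuper : ∀ h₁ h₂ : ℝ, (0 ≤ h₁ ∧ 0 ≤ h₂) ∨ (h₁ ≤ 0 ∧ h₂ ≤ 0) →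
      A p h₁ + A p h₂ ≤ A p (h₁ + h₂) := by
    intro h₁ h₂ hsign
    refine le_of_tendsto_of_tendsto ((hTend p h₁ hpS).add (hTend p h₂ hpS))
      (hTend p (h₁ + h₂) hpS) ?_
    filter_upwards [eventually_ge_atTop (K h₁), eventually_ge_atTop (K h₂),
      eventually_ge_atTop (K (h₁ + h₂))] with n hn1 hn2 hn3
    have m1 : p + (1/2:ℝ)^n * h₁ ∈ I := hvalid p h₁ n hpS hn1
    have m3 : p + (1/2:ℝ)^n * (h₁ + h₂) ∈ I := hvalid p (h₁ + h₂) n hpS hn3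
    have hpair := NgAux.pair hWf (x := p) (y := p + (1/2:ℝ)^n * (h₁ + h₂))
      (m₁ := p + (1/2:ℝ)^n * h₁) (m₂ := p + (1/2:ℝ)^n * h₂) hpI m3 (by ring) ?_ ?_
    · simp only [hQdef]
      rw [← add_div]
      exact (div_le_div_iff_of_pos_right (hc0 n)).mpr (by linarith)
    · rcases hsign with ⟨ha, hb⟩ | ⟨ha, hb⟩
      · rw [min_eq_left (by nlinarith [hc0 n])]
        nlinarith [hc0 n]
      · rw [min_eq_right (by nlinarith [hc0 n])]
        nlinarith [hc0 n]
    · rcases hsign with ⟨ha, hb⟩ | ⟨ha, hb⟩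
      · rw [max_eq_right (by nlinarith [hc0 n])]
        nlinarith [hc0 n]
      · rw [max_eq_left (by nlinarith [hc0 n])]
        nlinarith [hc0 n]
  have hadd0 : ∀ h₁ h₂ : ℝ, 0 ≤ h₁ → 0 ≤ h₂ →
      A p (h₁ + h₂) = A p h₁ + A p h₂ := by
    intro h₁ h₂ ha hb
    refine le_antisymm ?_ (hsuper h₁ h₂ (Or.inl ⟨ha, hb⟩))
    have h1 := hsuper (-h₁) (-h₂) (Or.inr ⟨by linarith, by linarith⟩)
    rw [hneg, hneg, show -h₁ + -h₂ = -(h₁ + h₂) by ring, hneg] at h1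
    linarith
  have hadd : ∀ x y : ℝ, A p (x + y) = A p x + A p y := by
    intro x y
    rcases le_total 0 x with hx | hx <;> rcases le_total 0 y with hy | hy
    · exact hadd0 x y hx hy
    · rcases le_total 0 (x + y) with hxy | hxy
      · have h1 := hadd0 (x + y) (-y) hxy (by linarith)
        rw [show x + y + -y = x by ring, hneg] at h1
        linarith
      · have h1 := hadd0 (-(x + y)) x (by linarith) hx
        rw [show -(x + y) + x = -y by ring, hneg, hneg] at h1
        linarith
    · rcases le_total 0 (x + y) with hxy | hxy
      · have h1 := hadd0 (x + y) (-x) hxy (by linarith)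
        rw [show x + y + -x = y by ring, hneg] at h1
        linarith
      · have h1 := hadd0 (-(x + y)) y (by linarith) hy
        rw [show -(x + y) + y = -x by ring, hneg, hneg] at h1
        linarith
    · have h1 := hadd0 (-x) (-y) (by linarith) (by linarith)
      rw [show -x + -y = -(x + y) by ring, hneg, hneg, hneg] at h1
      linarith
  set g : ℝ → ℝ := fun x => f x - A p x with hgdef
  have hgmin : ∀ x ∈ I, g p ≤ g x := by
    intro x hx
    have h1 : A p (x - p) ≤ f x - f p := by
      have h2 := hAle p (x - p) hpS (by rwa [add_sub_cancel])
      rwa [add_sub_cancel] at h2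
    have h2 : A p (x - p) = A p x - A p p := by
      have h3 := hadd (x - p) p
      rw [sub_add_cancel] at h3
      linarith
    simp only [hgdef]
    linarith
  have hWg : NgAux.Wr I g := by
    intro x hx y hy t ht
    have h1 := hf x hx y hy t ht
    have h2 : A p (t*x + (1-t)*y) + A p ((1-t)*x + t*y) = A p x + A p y := by
      rw [← hadd, ← hadd]
      exact congrArg (A p) (by ring)
    simp only [hgdef]
    linarith
  have hgR : ∀ u v : ℝ, u ∈ I → v ∈ I → p ≤ u → u ≤ v → g u ≤ g v := by
    intro u v hu hv hpu huv
    have hw : p + (v - u) ∈ I := hIcc p v _ hpI hv (by linarith) (by linarith)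
    have hinc := NgAux.incr hWg (u := p) (v := u) (h := v - u) hpI
      (by rw [show u + (v - u) = v by ring]; exact hv) hpu (by linarith)
    rw [show u + (v - u) = v by ring] at hinc
    have := hgmin _ hw
    linarith
  have hgL : ∀ u v : ℝ, u ∈ I → v ∈ I → u ≤ v → v ≤ p → g v ≤ g u := by
    intro u v hu hv huv hvp
    have hw : p - (v - u) ∈ I := hIcc u p _ hu hpI (by linarith) (by linarith)
    have hinc := NgAux.incr hWg (u := u) (v := p - (v - u)) (h := v - u) hu
      (by rw [show p - (v - u) + (v - u) = p by ring]; exact hpI) (by linarith) (by linarith)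
    rw [show u + (v - u) = v by ring, show p - (v - u) + (v - u) = p by ring] at hinc
    have := hgmin _ hw
    linarith
  refine ⟨g, fun x => A p x, ?_, hadd, ?_⟩
  · exact NgAux.convex_of_mono hC hWg p hgR hgL
  · intro x hx
    simp only [hgdef]
    ring
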